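/- arXiv:2105.08225 — 3 statements merged into one kernel-verified Lean document; each statement's English description precedes it below -/
import Mathlib

section
/- If G1 has at least one edge, then for any graph G2, the chromatic number of the lexicographic product satisfies χ(G1[G2]) ≥ χ(G1) + 2χ(G2) − 2. -/
open SimpleGraph Finset

/-- Lexicographic product of simple graphs. -/
def SimpleGraph.lexProd {α β : Type*} (G₁ : SimpleGraph α) (G₂ : SimpleGraph β) :
    SimpleGraph (α × β) where
  Adj x y := G₁.Adj x.1 y.1 ∨ (x.1 = y.1 ∧ G₂.Adj x.2 y.2)
  symm := by
    constructor
    rintro x y (h | ⟨h1, h2⟩)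
    · exact Or.inl h.symm
    · exact Or.inr ⟨h1.symm, h2.symm⟩
  loopless := by
    constructor
    rintro x (h | ⟨-, h⟩)
    · exact G₁.irrefl h
    · exact G₂.irrefl h

/-- `c` is a proper coloring such that each vertex `v` sees at least
`min r (deg v)` distinct colors among its neighbors. -/
def SimpleGraph.IsRDynamicColoring {α : Type*} (G : SimpleGraph α) (r : ℕ) (c : α → ℕ) : Prop :=
  (∀ u v, G.Adj u v → c u ≠ c v) ∧
  ∀ v, min r (G.neighborSet v).ncard ≤ (c '' G.neighborSet v).ncard

/-- The `r`-dynamic chromatic number: least `k` such that there is an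
`r`-dynamic coloring with colors in `{0, …, k-1}`. -/
noncomputable def SimpleGraph.rDynChromaticNumber {α : Type*} (G : SimpleGraph α) (r : ℕ) : ℕ :=
  sInf {k | ∃ c : α → ℕ, G.IsRDynamicColoring r c ∧ ∀ v, c v < k}

/-- Maximum degree (via `Set.ncard` of neighbor sets). -/
noncomputable def SimpleGraph.maxDeg {α : Type*} (G : SimpleGraph α) : ℕ :=
  sSup (Set.range fun v => (G.neighborSet v).ncard)

/-- Minimum degree (via `Set.ncard` of neighbor sets). -/
noncomputable def SimpleGraph.minDeg {α : Type*} (G : SimpleGraph α) : ℕ :=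
  sInf (Set.range fun v => (G.neighborSet v).ncard)

/-- The star `K_{1,m}`: center `0` adjacent to the `m` leaves. -/
def starGraph (m : ℕ) : SimpleGraph (Fin (m + 1)) :=
  SimpleGraph.fromRel (fun i _ => i = 0)

/-- The double star `K_{1,m,m}`: center `0`, middle vertices `1,…,m`,
outer leaf `i + m` attached to middle vertex `i`. -/
def doubleStarGraph (m : ℕ) : SimpleGraph (Fin (2 * m + 1)) :=
  SimpleGraph.fromRel (fun i j =>
    ((i : ℕ) = 0 ∧ 1 ≤ (j : ℕ) ∧ (j : ℕ) ≤ m) ∨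
    (1 ≤ (i : ℕ) ∧ (i : ℕ) ≤ m ∧ (j : ℕ) = (i : ℕ) + m))

/-- The triple star `K_{1,m,m,m}`: center `0`, middle vertices `1,…,m`,
vertex `i + m` attached to `i` for `1 ≤ i ≤ 2m`. -/
def tripleStarGraph (m : ℕ) : SimpleGraph (Fin (3 * m + 1)) :=
  SimpleGraph.fromRel (fun i j =>
    ((i : ℕ) = 0 ∧ 1 ≤ (j : ℕ) ∧ (j : ℕ) ≤ m) ∨
    (1 ≤ (i : ℕ) ∧ (i : ℕ) ≤ 2 * m ∧ (j : ℕ) = (i : ℕ) + m))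

-- auxiliary: card of small-value Fins
lemma card_filter_fin_lt (m c : ℕ) (hc : c ≤ m) :
    (Finset.univ.filter fun x : Fin m => (x : ℕ) < c).card = c := by
  have : Finset.image (Fin.val) (Finset.univ.filter fun x : Fin m => (x : ℕ) < c)
      = Finset.range c := by
    ext i
    simp only [Finset.mem_image, Finset.mem_filter, Finset.mem_univ, true_and,
      Finset.mem_range]
    constructor
    · rintro ⟨x, hx, rfl⟩; exact hx
    · intro hi; exact ⟨⟨i, lt_of_lt_of_le hi hc⟩, hi, rfl⟩
  have h2 := Finset.card_image_of_injective
    (Finset.univ.filter fun x : Fin m => (x : ℕ) < c) (Fin.val_injective)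
  rw [this, Finset.card_range] at h2
  omega


theorem stmt_4 {α β : Type*} [Fintype α] [Fintype β] [Nonempty β]
    (G₁ : SimpleGraph α) (G₂ : SimpleGraph β) (h : ∃ u v, G₁.Adj u v) :
    G₁.chromaticNumber + 2 * G₂.chromaticNumber - 2 ≤ (G₁.lexProd G₂).chromaticNumber := by
  classical
  set m : ℕ := ((G₁.lexProd G₂).chromaticNumber).toNat with hmdef
  have hcolm : (G₁.lexProd G₂).Colorable m := colorable_chromaticNumber_of_fintype _
  have hmeq : ((m : ℕ∞)) = (G₁.lexProd G₂).chromaticNumber := by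
    have hne : (G₁.lexProd G₂).chromaticNumber ≠ ⊤ :=
      chromaticNumber_ne_top_iff_exists.2 ⟨m, hcolm⟩
    exact ENat.coe_toNat hne
  obtain ⟨C⟩ := hcolm
  set k : ℕ := G₂.chromaticNumber.toNat with hkdef
  have hcolk : G₂.Colorable k := colorable_chromaticNumber_of_fintype _
  have hkeq : ((k : ℕ∞)) = G₂.chromaticNumber := by
    have hne : G₂.chromaticNumber ≠ ⊤ := chromaticNumber_ne_top_iff_exists.2 ⟨k, hcolk⟩
    exact ENat.coe_toNat hne
  -- fiber color sets
  set S : α → Finset (Fin m) := fun v => Finset.image (fun b => C (v, b)) Finset.univ with hS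
  have hSne : ∀ v, (S v).Nonempty := fun v =>
    Finset.image_nonempty.2 Finset.univ_nonempty
  have hSk : ∀ v, k ≤ (S v).card := by
    intro v
    have coloring : G₂.Coloring {x // x ∈ S v} :=
      Coloring.mk (fun b => ⟨C (v, b), by simp [hS]⟩)
        (by
          intro b b' hadj hceq
          exact C.valid (show (G₁.lexProd G₂).Adj (v, b) (v, b') from Or.inr ⟨rfl, hadj⟩)
            (congrArg Subtype.val hceq))
    have := coloring.colorable.chromaticNumber_le
    rw [← hkeq, Fintype.card_coe] at this
    exact_mod_cast this
  have hdisj : ∀ u v, G₁.Adj u v → Disjoint (S u) (S v) := by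
    intro u v huv
    rw [Finset.disjoint_left]
    rintro c hcu hcv
    simp only [hS, Finset.mem_image, Finset.mem_univ, true_and] at hcu hcv
    obtain ⟨b, hb⟩ := hcu
    obtain ⟨b', hb'⟩ := hcv
    exact C.valid (show (G₁.lexProd G₂).Adj (u, b) (v, b') from Or.inl huv)
      (hb.trans hb'.symm)
  -- m ≥ 2k
  obtain ⟨u₀, v₀, huv₀⟩ := h
  have h2k : 2 * k ≤ m := by
    have hcard : (S u₀ ∪ S v₀).card = (S u₀).card + (S v₀).card :=
      Finset.card_union_of_disjoint (hdisj _ _ huv₀)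
    have hle : (S u₀ ∪ S v₀).card ≤ m := by
      have := Finset.card_le_univ (S u₀ ∪ S v₀)
      simpa using this
    have := hSk u₀
    have := hSk v₀
    omega
  set t : ℕ := m - 2 * k + 2 with htdef
  have htm : t + 2 * k - 2 = m := by omega
  have ht2 : 2 ≤ t := by omega
  -- coloring of G₁ with t colors
  have hG1 : G₁.Colorable t := by
    rw [colorable_iff_exists_bdd_nat_coloring]
    refine ⟨Coloring.mk (fun v => min (((S v).min' (hSne v) : Fin m) : ℕ) (t - 1)) ?_, ?_⟩
    · intro u v huv heq
      set a : Fin m := (S u).min' (hSne u) with ha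
      set b : Fin m := (S v).min' (hSne v) with hb
      by_cases hau : (a : ℕ) < t - 1
      · by_cases hbv : (b : ℕ) < t - 1
        · -- both mins small: equal Fin values contradict disjointness
          have hab : (a : ℕ) = (b : ℕ) := by
            rw [min_eq_left hau.le, min_eq_left hbv.le] at heq
            exact heq
          have hab' : a = b := Fin.val_injective hab
          have hmemb : b ∈ S v := (S v).min'_mem (hSne v)
          rw [← hab'] at hmemb
          exact (Finset.disjoint_left.1 (hdisj u v huv)) ((S u).min'_mem (hSne u)) hmemb
        · rw [min_eq_left hau.le, min_eq_right (by omega)] at heq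
          omega
      · by_cases hbv : (b : ℕ) < t - 1
        · rw [min_eq_right (by omega), min_eq_left hbv.le] at heq
          omega
        · -- both mins ≥ t-1 : counting contradiction
          have hsubU : ∀ x ∈ S u ∪ S v, ¬ ((x : ℕ) < t - 1) := by
            intro x hx
            rcases Finset.mem_union.1 hx with hx | hx
            · have := (S u).min'_le x hx
              intro hlt; exact hau (lt_of_le_of_lt (Fin.le_iff_val_le_val.1 this) hlt)
            · have := (S v).min'_le x hx
              intro hlt; exact hbv (lt_of_le_of_lt (Fin.le_iff_val_le_val.1 this) hlt)
          have hd2 : Disjoint (S u ∪ S v)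
              (Finset.univ.filter fun x : Fin m => (x : ℕ) < t - 1) := by
            rw [Finset.disjoint_left]
            intro x hx hx'
            exact hsubU x hx (by simpa using (Finset.mem_filter.1 hx').2)
          have hcard2 : (S u ∪ S v).card +
              (Finset.univ.filter fun x : Fin m => (x : ℕ) < t - 1).card ≤ m := by
            have := Finset.card_le_univ
              ((S u ∪ S v) ∪ (Finset.univ.filter fun x : Fin m => (x : ℕ) < t - 1))
            rw [Finset.card_union_of_disjoint hd2] at this
            simpa using this
          rw [card_filter_fin_lt m (t - 1) (by omega)] at hcard2
          have hcu : (S u ∪ S v).card = (S u).card + (S v).card :=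
            Finset.card_union_of_disjoint (hdisj u v huv)
          have h1 := hSk u
          have h2 := hSk v
          omega
    · intro v
      exact lt_of_le_of_lt (min_le_right _ _) (by omega)
  -- conclude
  have hG1le : G₁.chromaticNumber ≤ (t : ℕ∞) := hG1.chromaticNumber_le
  rw [← hmeq, ← hkeq]
  calc G₁.chromaticNumber + 2 * (k : ℕ∞) - 2 ≤ (t : ℕ∞) + 2 * (k : ℕ∞) - 2 := by
        gcongr
    _ = ((t + 2 * k - 2 : ℕ) : ℕ∞) := by
        rw [ENat.coe_sub]; push_cast; ring_nf
    _ = (m : ℕ∞) := by rw [htm]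
end

section
/- For integers l ≥ 2, m ≥ 3 and 1 ≤ r ≤ 3, the r-dynamic chromatic number of P_l[K_{1,m,m,m}] equals 4. -/
open SimpleGraph

/-- vertex parity coloring of the triple star -/
def pcol (m v : ℕ) : ℕ :=
  if v = 0 then 0 else if v ≤ m then 1 else if v ≤ 2 * m then 0 else 1

lemma pcol_le (m v : ℕ) : pcol m v ≤ 1 := by
  unfold pcol; split_ifs <;> omega

lemma pcol_zero (m : ℕ) : pcol m 0 = 0 := by unfold pcol; simp

lemma pcol_one {m : ℕ} (hm : 1 ≤ m) : pcol m 1 = 1 := by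
  simp [pcol, hm]

lemma pcol_ne {m a b : ℕ}
    (h : (a = 0 ∧ 1 ≤ b ∧ b ≤ m) ∨ (1 ≤ a ∧ a ≤ 2 * m ∧ b = a + m)) :
    pcol m a ≠ pcol m b := by
  unfold pcol; split_ifs <;> omega

lemma ncard_ge_three {S : Set ℕ} (hS : S.Finite) {a b d : ℕ}
    (ha : a ∈ S) (hb : b ∈ S) (hd : d ∈ S)
    (hab : a ≠ b) (had : a ≠ d) (hbd : b ≠ d) : 3 ≤ S.ncard := by
  have hsub : ({a, b, d} : Set ℕ) ⊆ S := by
    intro x hx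
    rcases hx with rfl | rfl | rfl <;> assumption
  have h3 : ({a, b, d} : Set ℕ).ncard = 3 := by
    rw [Set.ncard_insert_of_notMem (by simp [hab, had]) (Set.toFinite _),
      Set.ncard_pair hbd]
  calc 3 = ({a, b, d} : Set ℕ).ncard := h3.symm
    _ ≤ S.ncard := Set.ncard_le_ncard hsub hS

theorem stmt_14 (l m r : ℕ) (hl : 2 ≤ l) (hm : 3 ≤ m) (hr1 : 1 ≤ r) (hr3 : r ≤ 3) :
    ((SimpleGraph.pathGraph l).lexProd (tripleStarGraph m)).rDynChromaticNumber r = 4 := by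
  set G := (SimpleGraph.pathGraph l).lexProd (tripleStarGraph m) with hG
  -- the 4-coloring
  set c : Fin l × Fin (3 * m + 1) → ℕ :=
    fun x => 2 * (x.1.val % 2) + pcol m x.2.val with hc
  have hproper : ∀ u v, G.Adj u v → c u ≠ c v := by
    rintro ⟨i, v⟩ ⟨j, w⟩ (h | ⟨h1, h2⟩)
    · rw [SimpleGraph.pathGraph_adj] at h
      replace h : i.val + 1 = j.val ∨ j.val + 1 = i.val := h
      have h1 := pcol_le m v.val
      have h2 := pcol_le m w.val
      show 2 * (i.val % 2) + pcol m v.val ≠ 2 * (j.val % 2) + pcol m w.val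
      omega
    · have hiw : pcol m v.val ≠ pcol m w.val := by
        rw [tripleStarGraph, SimpleGraph.fromRel_adj] at h2
        rcases h2.2 with h' | h'
        · exact pcol_ne h'
        · exact (pcol_ne h').symm
      show 2 * (i.val % 2) + pcol m v.val ≠ 2 * (j.val % 2) + pcol m w.val
      rw [show i = j from h1]
      omega
  have hmem4 : 4 ∈ {k | ∃ c : (Fin l × Fin (3 * m + 1)) → ℕ,
      G.IsRDynamicColoring r c ∧ ∀ v, c v < k} := by
    refine ⟨c, ⟨hproper, ?_⟩, ?_⟩
    · rintro ⟨i, v⟩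
      -- pick the neighboring path index
      have hl1 : 1 < l := hl
      obtain ⟨j, hadjij, hpar⟩ : ∃ j : Fin l,
          (SimpleGraph.pathGraph l).Adj i j ∧ j.val % 2 ≠ i.val % 2 := by
        rcases Nat.eq_zero_or_pos i.val with h0 | hpos
        · exact ⟨⟨1, hl1⟩, SimpleGraph.pathGraph_adj.mpr (Or.inl (by simp; omega)), by simp; omega⟩
        · refine ⟨⟨i.val - 1, by omega⟩, SimpleGraph.pathGraph_adj.mpr (Or.inr (by simp; omega)), by simp; omega⟩
      -- pick a star-neighbor of v
      have hv3 : v.val < 3 * m + 1 := v.isLt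
      obtain ⟨w, hadjvw⟩ : ∃ w : Fin (3 * m + 1), (tripleStarGraph m).Adj v w := by
        rcases Nat.eq_zero_or_pos v.val with h0 | hpos
        · refine ⟨⟨1, by omega⟩, ?_⟩
          rw [tripleStarGraph, SimpleGraph.fromRel_adj]
          constructor
          · intro he; rw [Fin.ext_iff] at he; simp at he; omega
          · left; left; exact ⟨h0, le_refl 1, by show 1 ≤ m; omega⟩
        · rcases le_or_gt v.val (2 * m) with hle | hgt
          · refine ⟨⟨v.val + m, by omega⟩, ?_⟩
            rw [tripleStarGraph, SimpleGraph.fromRel_adj]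
            constructor
            · intro he; rw [Fin.ext_iff] at he; simp at he; omega
            · left; right; simp; omega
          · refine ⟨⟨v.val - m, by omega⟩, ?_⟩
            rw [tripleStarGraph, SimpleGraph.fromRel_adj]
            constructor
            · intro he; rw [Fin.ext_iff] at he; simp at he; omega
            · right; right; simp; omega
      -- three neighbors with three distinct colors
      have hn1 : ((j, (⟨0, by omega⟩ : Fin (3 * m + 1)))) ∈ G.neighborSet (i, v) :=
        Or.inl hadjij
      have hn2 : ((j, (⟨1, by omega⟩ : Fin (3 * m + 1)))) ∈ G.neighborSet (i, v) :=
        Or.inl hadjij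
      have hn3 : ((i, w)) ∈ G.neighborSet (i, v) := Or.inr ⟨rfl, hadjvw⟩
      have hfin : (c '' G.neighborSet (i, v)).Finite :=
        ((G.neighborSet (i, v)).toFinite).image c
      have hm1 : (1 : ℕ) ≤ m := by omega
      have hwle := pcol_le m w.val
      have h3 : 3 ≤ (c '' G.neighborSet (i, v)).ncard := by
        refine ncard_ge_three hfin (Set.mem_image_of_mem c hn1)
          (Set.mem_image_of_mem c hn2) (Set.mem_image_of_mem c hn3) ?_ ?_ ?_
        · show 2 * (j.val % 2) + pcol m 0 ≠ 2 * (j.val % 2) + pcol m 1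
          rw [pcol_zero, pcol_one hm1]; omega
        · show 2 * (j.val % 2) + pcol m 0 ≠ 2 * (i.val % 2) + pcol m w.val
          rw [pcol_zero]; omega
        · show 2 * (j.val % 2) + pcol m 1 ≠ 2 * (i.val % 2) + pcol m w.val
          rw [pcol_one hm1]; omega
      omega
    · rintro ⟨i, v⟩
      have h1 := pcol_le m v.val
      have h2 : i.val % 2 < 2 := Nat.mod_lt _ (by omega)
      simp only [hc]
      omega
  -- lower bound: any valid k is at least 4 (K₄ subgraph)
  have hlb : ∀ k ∈ {k | ∃ c : (Fin l × Fin (3 * m + 1)) → ℕ,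
      G.IsRDynamicColoring r c ∧ ∀ v, c v < k}, 4 ≤ k := by
    rintro k ⟨d, ⟨hdp, -⟩, hdk⟩
    set i0 : Fin l := ⟨0, by omega⟩
    set i1 : Fin l := ⟨1, by omega⟩
    set v0 : Fin (3 * m + 1) := ⟨0, by omega⟩
    set v1 : Fin (3 * m + 1) := ⟨1, by omega⟩
    have hpath : (SimpleGraph.pathGraph l).Adj i0 i1 :=
      SimpleGraph.pathGraph_adj.mpr (Or.inl rfl)
    have hstar : (tripleStarGraph m).Adj v0 v1 := by
      rw [tripleStarGraph, SimpleGraph.fromRel_adj]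
      constructor
      · intro he; rw [Fin.ext_iff] at he; simp [v0, v1] at he
      · left; left; simp [v0, v1]; omega
    have e12 := hdp (i0, v0) (i0, v1) (Or.inr ⟨rfl, hstar⟩)
    have e34 := hdp (i1, v0) (i1, v1) (Or.inr ⟨rfl, hstar⟩)
    have e13 := hdp (i0, v0) (i1, v0) (Or.inl hpath)
    have e14 := hdp (i0, v0) (i1, v1) (Or.inl hpath)
    have e23 := hdp (i0, v1) (i1, v0) (Or.inl hpath)
    have e24 := hdp (i0, v1) (i1, v1) (Or.inl hpath)
    have b1 := hdk (i0, v0)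
    have b2 := hdk (i0, v1)
    have b3 := hdk (i1, v0)
    have b4 := hdk (i1, v1)
    omega
  rw [SimpleGraph.rDynChromaticNumber]
  exact le_antisymm (Nat.sInf_le hmem4) (le_csInf ⟨4, hmem4⟩ hlb)
end

section
/- For integers m, n ≥ 3 and 1 ≤ r ≤ 2m − 1, the r-dynamic chromatic number of K_m[P_n] equals exactly 2m. -/
open SimpleGraph

theorem stmt_16 (m n r : ℕ) (hm : 3 ≤ m) (hn : 3 ≤ n) (hr1 : 1 ≤ r) (hr : r ≤ 2 * m - 1) :
    ((completeGraph (Fin m)).lexProd (SimpleGraph.pathGraph n)).rDynChromaticNumber r = 2 * m := by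
  have hm0 : 0 < m := by omega
  set G := (completeGraph (Fin m)).lexProd (SimpleGraph.pathGraph n) with hG
  have hadj : ∀ x y : Fin m × Fin n, G.Adj x y ↔
      ((x.1 : ℕ) ≠ (y.1 : ℕ) ∨ ((x.1 : ℕ) = (y.1 : ℕ) ∧
        ((x.2 : ℕ) + 1 = (y.2 : ℕ) ∨ (y.2 : ℕ) + 1 = (x.2 : ℕ)))) := by
    intro x y
    show ((⊤ : SimpleGraph (Fin m)).Adj x.1 y.1 ∨ _) ↔ _
    rw [SimpleGraph.pathGraph_adj]
    simp only [SimpleGraph.top_adj, ne_eq, Fin.ext_iff]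
  set c : Fin m × Fin n → ℕ := fun p => (p.1 : ℕ) + m * ((p.2 : ℕ) % 2) with hc
  have hclt : ∀ v, c v < 2 * m := by
    intro v
    have h1 := v.1.2
    rcases Nat.mod_two_eq_zero_or_one (v.2 : ℕ) with e | e <;> simp [hc, e] <;> omega
  have hmem : 2 * m ∈ {k | ∃ c : Fin m × Fin n → ℕ,
      G.IsRDynamicColoring r c ∧ ∀ v, c v < k} := by
    refine ⟨c, ⟨?_, ?_⟩, hclt⟩
    · intro u v huv hcv
      rw [hadj] at huv
      have h1 := u.1.2
      have h2 := v.1.2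
      rcases Nat.mod_two_eq_zero_or_one (u.2 : ℕ) with e1 | e1 <;>
        rcases Nat.mod_two_eq_zero_or_one (v.2 : ℕ) with e2 | e2 <;>
        simp [hc, e1, e2] at hcv <;>
        rcases huv with h | ⟨h, h'⟩ <;> omega
    · intro v
      have key : 2 * m - 1 ≤ (c '' G.neighborSet v).ncard := by
        have hsub : ↑((Finset.range (2 * m)).erase (c v)) ⊆ c '' G.neighborSet v := by
          intro k hk
          simp only [Finset.coe_erase, Set.mem_diff, Finset.mem_coe, Finset.mem_range,
            Set.mem_singleton_iff] at hk
          obtain ⟨hk1, hk2⟩ := hk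
          obtain ⟨a, b, hab, halt, hblt⟩ : ∃ a b, k = a + m * b ∧ a < m ∧ b < 2 := by
            by_cases h : k < m
            · exact ⟨k, 0, by omega, h, by omega⟩
            · exact ⟨k - m, 1, by omega, by omega, by omega⟩
          by_cases hcase : a = (v.1 : ℕ)
          · -- same column: use path neighbor of v.2
            have hbne : b ≠ (v.2 : ℕ) % 2 := by
              intro e
              exact hk2 (by rw [hab, hcase, e])
            obtain ⟨j', hj'n, hj'p, hor⟩ :
                ∃ j', j' < n ∧ j' % 2 = b ∧ ((v.2 : ℕ) + 1 = j' ∨ j' + 1 = (v.2 : ℕ)) := by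
              have hj := v.2.2
              by_cases h : (v.2 : ℕ) + 1 < n
              · exact ⟨(v.2 : ℕ) + 1, h, by omega, Or.inl rfl⟩
              · exact ⟨(v.2 : ℕ) - 1, by omega, by omega, Or.inr (by omega)⟩
            refine ⟨(v.1, ⟨j', hj'n⟩), ?_, ?_⟩
            · rw [SimpleGraph.mem_neighborSet, hadj]
              exact Or.inr ⟨rfl, by simpa using hor⟩
            · show (v.1 : ℕ) + m * ((((⟨j', hj'n⟩ : Fin n)) : ℕ) % 2) = k
              simp only [Fin.val_mk]
              rw [hj'p, hab, hcase]
          · refine ⟨(⟨a, halt⟩, ⟨b, by omega⟩), ?_, ?_⟩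
            · rw [SimpleGraph.mem_neighborSet, hadj]
              exact Or.inl (by simpa using fun e => hcase e.symm)
            · show a + m * (b % 2) = k
              rw [Nat.mod_eq_of_lt hblt, hab]
        have := Set.ncard_le_ncard hsub (Set.toFinite _)
        rwa [Set.ncard_coe_finset, Finset.card_erase_of_mem
          (Finset.mem_range.2 (hclt v)), Finset.card_range] at this
      calc min r (G.neighborSet v).ncard ≤ r := min_le_left _ _
        _ ≤ 2 * m - 1 := hr
        _ ≤ _ := key
  have hlb : ∀ k ∈ {k | ∃ c : Fin m × Fin n → ℕ,
      G.IsRDynamicColoring r c ∧ ∀ v, c v < k}, 2 * m ≤ k := by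
    rintro k ⟨d, ⟨hprop, _⟩, hlt⟩
    have hinj : Function.Injective (fun p : Fin m × Fin 2 =>
        (⟨d (p.1, ⟨(p.2 : ℕ), lt_of_lt_of_le p.2.2 (by omega)⟩),
          hlt _⟩ : Fin k)) := by
      intro p q hpq
      by_contra hne
      have hpq' : d (p.1, ⟨(p.2 : ℕ), lt_of_lt_of_le p.2.2 (by omega)⟩) =
          d (q.1, ⟨(q.2 : ℕ), lt_of_lt_of_le q.2.2 (by omega)⟩) := by
        simpa using congrArg Fin.val hpq
      refine hprop _ _ ?_ hpq'
      rw [hadj]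
      rcases eq_or_ne (p.1 : ℕ) (q.1 : ℕ) with h | h
      · right
        refine ⟨h, ?_⟩
        have h1 : p.1 = q.1 := Fin.ext h
        have h2 : (p.2 : ℕ) ≠ (q.2 : ℕ) := by
          intro e
          exact hne (Prod.ext h1 (Fin.ext e))
        have b1 := p.2.2
        have b2 := q.2.2
        simp only [Fin.val_mk] at *
        omega
      · exact Or.inl h
    have := Fintype.card_le_of_injective _ hinj
    simpa [mul_comm, Nat.mul_comm] using this
  unfold SimpleGraph.rDynChromaticNumber
  exact le_antisymm (Nat.sInf_le hmem) (le_csInf ⟨_, hmem⟩ hlb)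
end
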